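/- Let {𝒜_k}_{k≥1} be a sequence of wild labyrinth patterns with widths m_k ≥ 3. Then the limit set L_∞ (a mixed wild labyrinth fractal) is connected; in particular every self-similar wild labyrinth fractal (the case 𝒜_k = 𝒜_1 for all k) is connected. -/

import Mathlib

open Set

namespace Labyrinth

/-- The closed square `S_{i,j,m} = [i/m,(i+1)/m] × [j/m,(j+1)/m]` of the `m × m` grid
on the unit square, indexed by `p = (i,j)`. -/
def cell (m : ℕ) (p : ℕ × ℕ) : Set (ℝ × ℝ) :=
  Icc ((p.1 : ℝ) / (m : ℝ)) (((p.1 : ℝ) + 1) / (m : ℝ)) ×ˢ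
    Icc ((p.2 : ℝ) / (m : ℝ)) (((p.2 : ℝ) + 1) / (m : ℝ))

/-- An `m`-pattern: a nonempty set of grid indices within the `m × m` grid. -/
def IsPattern (m : ℕ) (A : Set (ℕ × ℕ)) : Prop :=
  A.Nonempty ∧ ∀ p ∈ A, p.1 < m ∧ p.2 < m

/-- Two grid squares share a side. -/
def SideAdj (p q : ℕ × ℕ) : Prop :=
  (p.1 = q.1 ∧ (p.2 + 1 = q.2 ∨ q.2 + 1 = p.2)) ∨
  (p.2 = q.2 ∧ (p.1 + 1 = q.1 ∨ q.1 + 1 = p.1))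

/-- Two grid squares share a side or a corner. -/
def CornerAdj (p q : ℕ × ℕ) : Prop :=
  SideAdj p q ∨
  ((p.1 + 1 = q.1 ∨ q.1 + 1 = p.1) ∧ (p.2 + 1 = q.2 ∨ q.2 + 1 = p.2))

/-- The graph `𝒢(𝒜)` of a pattern: vertices are its squares, two squares being
adjacent iff they share a side. -/
def patternGraph (A : Set (ℕ × ℕ)) : SimpleGraph ↥A where
  Adj p q := SideAdj p.1 q.1
  symm := by
    constructor
    rintro ⟨p, hp⟩ ⟨q, hq⟩ h
    rcases h with ⟨h1, h2⟩ | ⟨h1, h2⟩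
    · exact Or.inl ⟨h1.symm, h2.symm⟩
    · exact Or.inr ⟨h1.symm, h2.symm⟩
  loopless := by
    constructor
    rintro ⟨p, hp⟩ h
    rcases h with ⟨h1, h2 | h2⟩ | ⟨h1, h2 | h2⟩ <;> omega

/-- The four sides of a square/pattern. -/
inductive Side | top | bottom | left | right
deriving DecidableEq

/-- `p` is an exit square of the `m`-pattern `A` on the given side. -/
def IsExitSq (m : ℕ) (A : Set (ℕ × ℕ)) : Side → ℕ × ℕ → Prop
  | .top, p => p ∈ A ∧ p.2 = m - 1 ∧ (p.1, 0) ∈ A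
  | .bottom, p => p ∈ A ∧ p.2 = 0 ∧ (p.1, m - 1) ∈ A
  | .left, p => p ∈ A ∧ p.1 = 0 ∧ (m - 1, p.2) ∈ A
  | .right, p => p ∈ A ∧ p.1 = m - 1 ∧ (0, p.2) ∈ A

/-- An `m × m`-labyrinth pattern: a nonempty `m`-pattern, `m ≥ 3`, whose graph is a tree,
with exactly one vertical and exactly one horizontal exit pair, and no two white squares
at diagonally opposite corners. -/
def IsLabyrinthPattern (m : ℕ) (A : Set (ℕ × ℕ)) : Prop :=
  3 ≤ m ∧ IsPattern m A ∧ (patternGraph A).IsTree ∧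
    (∃! i : ℕ, (i, m - 1) ∈ A ∧ (i, 0) ∈ A) ∧
    (∃! j : ℕ, (0, j) ∈ A ∧ (m - 1, j) ∈ A) ∧
    ((0, 0) ∈ A → (m - 1, m - 1) ∉ A) ∧
    ((m - 1, 0) ∈ A → (0, m - 1) ∉ A)

/-- A wild labyrinth pattern: the graph is merely connected, and there is at least one
vertical and at least one horizontal exit pair. -/
def IsWildLabyrinthPattern (m : ℕ) (A : Set (ℕ × ℕ)) : Prop :=
  3 ≤ m ∧ IsPattern m A ∧ (patternGraph A).Connected ∧
    (∃ i : ℕ, (i, m - 1) ∈ A ∧ (i, 0) ∈ A) ∧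
    (∃ j : ℕ, (0, j) ∈ A ∧ (m - 1, j) ∈ A) ∧
    ((0, 0) ∈ A → (m - 1, m - 1) ∉ A) ∧
    ((m - 1, 0) ∈ A → (0, m - 1) ∉ A)

/-- One substitution step: place a copy of the pattern `A'` (of width `m'`) into each
white square of `W`. -/
def subst (m' : ℕ) (A' W : Set (ℕ × ℕ)) : Set (ℕ × ℕ) :=
  {q | ∃ p ∈ W, ∃ r ∈ A', q = (p.1 * m' + r.1, p.2 * m' + r.2)}

/-- The white squares `𝒲_n` of level `n`; `whites m A n` is the paper's `𝒲_n`, where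
`A k` is the paper's pattern `𝒜_{k+1}` of width `m k = m_{k+1}`; level `0` is the whole
unit square. -/
def whites (m : ℕ → ℕ) (A : ℕ → Set (ℕ × ℕ)) : ℕ → Set (ℕ × ℕ)
  | 0 => {(0, 0)}
  | n + 1 => subst (m n) (A n) (whites m A n)

/-- `m(n) = m_1 ⋯ m_n`. -/
def mProd (m : ℕ → ℕ) (n : ℕ) : ℕ := ∏ k ∈ Finset.range n, m k

/-- The black squares `ℬ_n` of level `n`. -/
def blacks (m : ℕ → ℕ) (A : ℕ → Set (ℕ × ℕ)) (n : ℕ) : Set (ℕ × ℕ) :=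
  {p : ℕ × ℕ | p.1 < mProd m n ∧ p.2 < mProd m n} \ whites m A n

/-- A border square of the `m × m` grid. -/
def IsBorder (m : ℕ) (p : ℕ × ℕ) : Prop :=
  p.1 = 0 ∨ p.2 = 0 ∨ p.1 = m - 1 ∨ p.2 = m - 1

/-- `L_n`, the union of the white squares of level `n`. -/
def levelSet (m : ℕ → ℕ) (A : ℕ → Set (ℕ × ℕ)) (n : ℕ) : Set (ℝ × ℝ) :=
  ⋃ p ∈ whites m A n, cell (mProd m n) p

/-- `L_∞ = ⋂_{n ≥ 1} L_n` (the term `n = 0` is the whole unit square). -/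
def limitSet (m : ℕ → ℕ) (A : ℕ → Set (ℕ × ℕ)) : Set (ℝ × ℝ) :=
  ⋂ n, levelSet m A n

def unitSquare : Set (ℝ × ℝ) := Icc (0 : ℝ) 1 ×ˢ Icc (0 : ℝ) 1

/-- A path in a graph (with adjacency `Adj`, within the vertex set `A`)
from `u` to `v`: a nonempty list of distinct, consecutively adjacent squares of `A`,
starting at `u` and ending at `v`. -/
def IsPathIn (Adj : ℕ × ℕ → ℕ × ℕ → Prop) (A : Set (ℕ × ℕ))
    (l : List (ℕ × ℕ)) (u v : ℕ × ℕ) : Prop :=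
  l ≠ [] ∧ l.Nodup ∧ l.Chain' Adj ∧ (∀ p ∈ l, p ∈ A) ∧
    l.head? = some u ∧ l.getLast? = some v

/-- `s` is an arc between `a` and `b`: a homeomorphic image of `[0,1]`
with endpoints `a` and `b`. -/
def IsArc (s : Set (ℝ × ℝ)) (a b : ℝ × ℝ) : Prop :=
  ∃ f : ℝ → ℝ × ℝ, ContinuousOn f (Icc 0 1) ∧ InjOn f (Icc 0 1) ∧
    f '' Icc 0 1 = s ∧ f 0 = a ∧ f 1 = b

/-- `e` is the exit point of `L_∞` of the given type: for every `n ≥ 1` it lies in the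
exit square of that type of `𝒲_n`. -/
def IsExitPoint (m : ℕ → ℕ) (A : ℕ → Set (ℕ × ℕ)) (s : Side) (e : ℝ × ℝ) : Prop :=
  ∀ n, 1 ≤ n → ∃ p, IsExitSq (mProd m n) (whites m A n) s p ∧ e ∈ cell (mProd m n) p

/-- The (closed) edge of the grid square `p` of the `m × m` grid on the given side. -/
def cellEdge (m : ℕ) (p : ℕ × ℕ) : Side → Set (ℝ × ℝ)
  | .top => Icc ((p.1 : ℝ) / (m : ℝ)) (((p.1 : ℝ) + 1) / (m : ℝ)) ×ˢ {((p.2 : ℝ) + 1) / (m : ℝ)}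
  | .bottom => Icc ((p.1 : ℝ) / (m : ℝ)) (((p.1 : ℝ) + 1) / (m : ℝ)) ×ˢ {(p.2 : ℝ) / (m : ℝ)}
  | .left => {(p.1 : ℝ) / (m : ℝ)} ×ˢ Icc ((p.2 : ℝ) / (m : ℝ)) (((p.2 : ℝ) + 1) / (m : ℝ))
  | .right => {((p.1 : ℝ) + 1) / (m : ℝ)} ×ˢ Icc ((p.2 : ℝ) / (m : ℝ)) (((p.2 : ℝ) + 1) / (m : ℝ))

/-- Directions in the grid. -/
inductive Dir | up | down | left | right
deriving DecidableEq

/-- `stepDir p q d`: the square `q` is the neighbour of `p` in direction `d`. -/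
def stepDir (p q : ℕ × ℕ) : Dir → Prop
  | .up => q.1 = p.1 ∧ q.2 = p.2 + 1
  | .down => q.1 = p.1 ∧ p.2 = q.2 + 1
  | .left => q.2 = p.2 ∧ p.1 = q.1 + 1
  | .right => q.2 = p.2 ∧ q.1 = p.1 + 1

/-- The outward direction through a given side. -/
def outDir : Side → Dir
  | .top => .up
  | .bottom => .down
  | .left => .left
  | .right => .right

def sideOfDir : Dir → Side
  | .up => .top
  | .down => .bottom
  | .left => .left
  | .right => .right

/-- The six types `A, B, C, D, E, F` of paths (and of squares within a path). -/
inductive PTy | A | B | C | D | E | F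
deriving DecidableEq

instance : Fintype PTy :=
  ⟨{.A, .B, .C, .D, .E, .F}, by intro x; cases x <;> simp⟩

/-- The exit at which the `x`-path starts: `A`: top→bottom, `B`: left→right,
`C`: top→right, `D`: right→bottom, `E`: bottom→left, `F`: left→top. -/
def startSide : PTy → Side
  | .A => .top
  | .B => .left
  | .C => .top
  | .D => .right
  | .E => .bottom
  | .F => .left

/-- The exit at which the `x`-path ends. -/
def endSide : PTy → Side
  | .A => .bottom
  | .B => .right
  | .C => .right
  | .D => .bottom
  | .E => .left
  | .F => .top

/-- The two neighbour directions characterising a square of each type. -/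
def ptyDirPair : PTy → Dir × Dir
  | .A => (.up, .down)
  | .B => (.left, .right)
  | .C => (.up, .right)
  | .D => (.right, .down)
  | .E => (.down, .left)
  | .F => (.left, .up)

def ptyDirs (τ : PTy) : Set Dir := {(ptyDirPair τ).1, (ptyDirPair τ).2}

/-- The set of directions from the `i`-th square of the path `l` towards its neighbours
within the path, where the first and last squares (exit squares) are regarded as having
an additional neighbour outside the unit square, in directions `dstart`, `dend`
respectively. -/
def pathDirs (l : List (ℕ × ℕ)) (dstart dend : Dir) (i : ℕ) : Set Dir :=
  {d | (∃ p q, l[i]? = some p ∧ l[i - 1]? = some q ∧ 0 < i ∧ stepDir p q d)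
    ∨ (∃ p q, l[i]? = some p ∧ l[i + 1]? = some q ∧ stepDir p q d)
    ∨ (i = 0 ∧ d = dstart)
    ∨ (i + 1 = l.length ∧ d = dend)}

/-- The number of `τ`-squares of the path `l` (with outward exit directions
`dstart`, `dend`). -/
noncomputable def countTy (l : List (ℕ × ℕ)) (dstart dend : Dir) (τ : PTy) : ℕ :=
  {i | i < l.length ∧ pathDirs l dstart dend i = ptyDirs τ}.ncard

/-- `M(n) = M_1 ⋅ M_2 ⋅ ⋯ ⋅ M_n`. -/
def matProd (M : ℕ → Matrix PTy PTy ℕ) (n : ℕ) : Matrix PTy PTy ℕ :=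
  ((List.range n).map M).prod

/-- A simple closed curve: a subspace homeomorphic to the circle. -/
def IsSimpleClosedCurve (s : Set (ℝ × ℝ)) : Prop :=
  Nonempty (↥s ≃ₜ AddCircle (1 : ℝ))

/-- The number of `δ`-mesh squares meeting `E`. -/
noncomputable def meshCount (δ : ℝ) (E : Set (ℝ × ℝ)) : ℕ :=
  {q : ℤ × ℤ | (E ∩ (Icc ((q.1 : ℝ) * δ) (((q.1 : ℝ) + 1) * δ) ×ˢ
      Icc ((q.2 : ℝ) * δ) (((q.2 : ℝ) + 1) * δ))).Nonempty}.ncard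

/-- The lower box-counting dimension of `E ⊆ ℝ²`. -/
noncomputable def lowerBoxDim (E : Set (ℝ × ℝ)) : ℝ :=
  Filter.liminf (fun δ : ℝ => Real.log (meshCount δ E) / (-Real.log δ)) (nhdsWithin 0 (Ioi 0))

/-- The upper box-counting dimension of `E ⊆ ℝ²`. -/
noncomputable def upperBoxDim (E : Set (ℝ × ℝ)) : ℝ :=
  Filter.limsup (fun δ : ℝ => Real.log (meshCount δ E) / (-Real.log δ)) (nhdsWithin 0 (Ioi 0))

end Labyrinth

section WildAux
open Labyrinth Set Relation

namespace WildAux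

variable {m : ℕ → ℕ} {A : ℕ → Set (ℕ × ℕ)}

lemma mProd_pos (hm : ∀ k, 1 ≤ m k) (n : ℕ) : 0 < mProd m n :=
  Finset.prod_pos fun k _ => hm k

lemma mProd_succ (n : ℕ) : mProd m (n + 1) = mProd m n * m n :=
  Finset.prod_range_succ _ _

/-- The embedding of the square `r` of the subpattern into the copy sitting in `p`. -/
def emb (M' : ℕ) (p r : ℕ × ℕ) : ℕ × ℕ := (p.1 * M' + r.1, p.2 * M' + r.2)

lemma emb_mem {n : ℕ} {p r : ℕ × ℕ} (hp : p ∈ whites m A n) (hr : r ∈ A n) :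
    emb (m n) p r ∈ whites m A (n + 1) :=
  ⟨p, hp, r, hr, rfl⟩

lemma whites_lt (hA : ∀ k, IsPattern (m k) (A k)) :
    ∀ n, ∀ p ∈ whites m A n, p.1 < mProd m n ∧ p.2 < mProd m n := by
  intro n
  induction n with
  | zero =>
    intro p hp
    have : p = (0, 0) := hp
    subst this
    simp [mProd]
  | succ n ih =>
    rintro q ⟨p, hp, r, hr, rfl⟩
    have h1 := ih p hp
    have h2 := (hA n).2 r hr
    rw [mProd_succ]
    constructor
    · calc p.1 * m n + r.1 < p.1 * m n + m n := by omega
        _ = (p.1 + 1) * m n := by ring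
        _ ≤ mProd m n * m n := Nat.mul_le_mul_right _ (by omega)
    · calc p.2 * m n + r.2 < p.2 * m n + m n := by omega
        _ = (p.2 + 1) * m n := by ring
        _ ≤ mProd m n * m n := Nat.mul_le_mul_right _ (by omega)

lemma whites_nonempty (hA : ∀ k, IsPattern (m k) (A k)) (n : ℕ) :
    (whites m A n).Nonempty := by
  induction n with
  | zero => exact ⟨(0, 0), rfl⟩
  | succ n ih =>
    obtain ⟨p, hp⟩ := ih
    obtain ⟨r, hr⟩ := (hA n).1
    exact ⟨emb (m n) p r, emb_mem hp hr⟩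

lemma whites_finite (hA : ∀ k, IsPattern (m k) (A k)) (n : ℕ) :
    (whites m A n).Finite := by
  apply Set.Finite.subset ((Set.finite_Iio (mProd m n)).prod (Set.finite_Iio (mProd m n)))
  intro p hp
  exact ⟨(whites_lt hA n p hp).1, (whites_lt hA n p hp).2⟩

lemma cell_isCompact (M : ℕ) (p : ℕ × ℕ) : IsCompact (cell M p) :=
  isCompact_Icc.prod isCompact_Icc

lemma mem_cell {M : ℕ} (hM : 0 < M) {p : ℕ × ℕ} {a b : ℕ}
    (h1 : p.1 ≤ a) (h2 : a ≤ p.1 + 1) (h3 : p.2 ≤ b) (h4 : b ≤ p.2 + 1) :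
    ((a : ℝ) / M, (b : ℝ) / M) ∈ cell M p := by
  have hM' : (0 : ℝ) < M := by exact_mod_cast hM
  have c1 : (p.1 : ℝ) / M ≤ (a : ℝ) / M := by gcongr
  have c2 : (a : ℝ) / M ≤ ((p.1 : ℝ) + 1) / M := by gcongr; exact_mod_cast h2
  have c3 : (p.2 : ℝ) / M ≤ (b : ℝ) / M := by gcongr
  have c4 : (b : ℝ) / M ≤ ((p.2 : ℝ) + 1) / M := by gcongr; exact_mod_cast h4
  exact ⟨⟨c1, c2⟩, c3, c4⟩

lemma cell_nonempty {M : ℕ} (hM : 0 < M) (p : ℕ × ℕ) : (cell M p).Nonempty :=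
  ⟨_, mem_cell hM (le_refl p.1) (Nat.le_succ _) (le_refl p.2) (Nat.le_succ _)⟩

lemma adj_cells_inter {M : ℕ} (hM : 0 < M) {p q : ℕ × ℕ} (h : SideAdj p q) :
    (cell M p ∩ cell M q).Nonempty := by
  refine ⟨(((max p.1 q.1 : ℕ) : ℝ) / M, ((max p.2 q.2 : ℕ) : ℝ) / M),
    mem_cell hM ?_ ?_ ?_ ?_, mem_cell hM ?_ ?_ ?_ ?_⟩ <;>
  · rcases h with ⟨h1, h2 | h2⟩ | ⟨h1, h2 | h2⟩ <;> omega

lemma cell_subset {M M' : ℕ} (hM : 0 < M) (hM' : 0 < M') {p r : ℕ × ℕ}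
    (h1 : r.1 < M') (h2 : r.2 < M') :
    cell (M * M') (emb M' p r) ⊆ cell M p := by
  have hMr : (0 : ℝ) < M := by exact_mod_cast hM
  have hM'r : (0 : ℝ) < M' := by exact_mod_cast hM'
  have hr1 : (r.1 : ℝ) + 1 ≤ M' := by exact_mod_cast h1
  have hr2 : (r.2 : ℝ) + 1 ≤ M' := by exact_mod_cast h2
  have hr1' : (0 : ℝ) ≤ r.1 := Nat.cast_nonneg _
  have hr2' : (0 : ℝ) ≤ r.2 := Nat.cast_nonneg _
  apply Set.prod_mono <;> apply Icc_subset_Icc <;>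
  · simp only [emb]
    rw [div_le_div_iff₀ (by positivity) (by positivity)]
    push_cast
    nlinarith [hMr.le, hM'r.le, mul_nonneg hr1' hMr.le, mul_nonneg hr2' hMr.le,
      mul_le_mul_of_nonneg_right hr1 hMr.le, mul_le_mul_of_nonneg_right hr2 hMr.le]

lemma levelSet_succ_subset (hm : ∀ k, 1 ≤ m k) (hA : ∀ k, IsPattern (m k) (A k)) (n : ℕ) :
    levelSet m A (n + 1) ⊆ levelSet m A n := by
  intro x hx
  rw [levelSet, mem_iUnion₂] at hx
  obtain ⟨q, hq, hx⟩ := hx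
  obtain ⟨p, hp, r, hr, rfl⟩ := hq
  rw [levelSet, mem_iUnion₂]
  refine ⟨p, hp, ?_⟩
  have h2 := (hA n).2 r hr
  have hsub := cell_subset (mProd_pos hm n) (hm n) (p := p) (r := r) h2.1 h2.2
  rw [mProd_succ] at hx
  exact hsub hx

/-- The step relation on white squares. -/
def Rw (W : Set (ℕ × ℕ)) (a b : ℕ × ℕ) : Prop := a ∈ W ∧ b ∈ W ∧ SideAdj a b

lemma sideAdj_emb {M' : ℕ} (a : ℕ × ℕ) {r s : ℕ × ℕ} (h : SideAdj r s) :
    SideAdj (emb M' a r) (emb M' a s) := by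
  obtain ⟨h1, h2 | h2⟩ | ⟨h1, h2 | h2⟩ := h
  · exact Or.inl ⟨by simp [emb, h1], Or.inl (by simp [emb, ← h2, add_assoc])⟩
  · exact Or.inl ⟨by simp [emb, h1], Or.inr (by simp [emb, ← h2, add_assoc])⟩
  · exact Or.inr ⟨by simp [emb, h1], Or.inl (by simp [emb, ← h2, add_assoc])⟩
  · exact Or.inr ⟨by simp [emb, h1], Or.inr (by simp [emb, ← h2, add_assoc])⟩

lemma reach_within_aux {n : ℕ} {a : ℕ × ℕ} (ha : a ∈ whites m A n) :
    ∀ {u v : ↥(A n)} (_ : (patternGraph (A n)).Walk u v),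
      ReflTransGen (Rw (whites m A (n + 1))) (emb (m n) a u.1) (emb (m n) a v.1) := by
  intro u v w
  induction w with
  | nil => exact .refl
  | @cons u u' v h w ih =>
    exact .head ⟨emb_mem ha u.2, emb_mem ha u'.2, sideAdj_emb _ h⟩ ih

lemma reach_within {n : ℕ} (hconn : (patternGraph (A n)).Connected)
    {a : ℕ × ℕ} (ha : a ∈ whites m A n) {r s : ℕ × ℕ} (hr : r ∈ A n) (hs : s ∈ A n) :
    ReflTransGen (Rw (whites m A (n + 1))) (emb (m n) a r) (emb (m n) a s) := by
  obtain ⟨w⟩ := hconn.preconnected ⟨r, hr⟩ ⟨s, hs⟩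
  exact reach_within_aux ha w

lemma exit_arith {M' c : ℕ} (h : 1 ≤ M') : c * M' + (M' - 1) + 1 = (c + 1) * M' := by
  rw [add_assoc, Nat.sub_add_cancel h, add_one_mul]

lemma cross_step (hw : ∀ k, IsWildLabyrinthPattern (m k) (A k)) {n : ℕ} {a b : ℕ × ℕ}
    (hab : SideAdj a b) :
    ∃ r ∈ A n, ∃ s ∈ A n, SideAdj (emb (m n) a r) (emb (m n) b s) := by
  obtain ⟨hm3, hpat, hconn, ⟨i, hi1, hi2⟩, ⟨j, hj1, hj2⟩, -, -⟩ := hw n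
  have hM1 : 1 ≤ m n := by omega
  obtain ⟨h1, h2 | h2⟩ | ⟨h1, h2 | h2⟩ := hab
  · -- b is above a : top exit of a's copy to bottom exit of b's copy
    refine ⟨(i, m n - 1), hi1, (i, 0), hi2, Or.inl ⟨by simp [emb, h1], Or.inl ?_⟩⟩
    show a.2 * m n + (m n - 1) + 1 = b.2 * m n + 0
    rw [exit_arith hM1, h2, Nat.add_zero]
  · -- a is above b
    refine ⟨(i, 0), hi2, (i, m n - 1), hi1, Or.inl ⟨by simp [emb, h1], Or.inr ?_⟩⟩
    show b.2 * m n + (m n - 1) + 1 = a.2 * m n + 0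
    rw [exit_arith hM1, h2, Nat.add_zero]
  · -- b is to the right of a
    refine ⟨(m n - 1, j), hj2, (0, j), hj1, Or.inr ⟨by simp [emb, h1], Or.inl ?_⟩⟩
    show a.1 * m n + (m n - 1) + 1 = b.1 * m n + 0
    rw [exit_arith hM1, h2, Nat.add_zero]
  · -- a is to the right of b
    refine ⟨(0, j), hj1, (m n - 1, j), hj2, Or.inr ⟨by simp [emb, h1], Or.inr ?_⟩⟩
    show b.1 * m n + (m n - 1) + 1 = a.1 * m n + 0
    rw [exit_arith hM1, h2, Nat.add_zero]

lemma reach_lift (hw : ∀ k, IsWildLabyrinthPattern (m k) (A k)) {n : ℕ}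
    {a b : ℕ × ℕ} (hab : ReflTransGen (Rw (whites m A n)) a b) (ha : a ∈ whites m A n) :
    ∀ {r s : ℕ × ℕ}, r ∈ A n → s ∈ A n →
      ReflTransGen (Rw (whites m A (n + 1))) (emb (m n) a r) (emb (m n) b s) := by
  induction hab with
  | refl => intro r s hr hs; exact reach_within (hw n).2.2.1 ha hr hs
  | @tail b c hab hbc ih =>
    intro r s hr hs
    obtain ⟨r', hr', s', hs', hadj⟩ := cross_step hw (n := n) hbc.2.2
    exact ((ih hr hr').tail ⟨emb_mem hbc.1 hr', emb_mem hbc.2.1 hs', hadj⟩).trans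
      (reach_within (hw n).2.2.1 hbc.2.1 hs' hs)

lemma whites_reach (hw : ∀ k, IsWildLabyrinthPattern (m k) (A k)) :
    ∀ n, ∀ p ∈ whites m A n, ∀ q ∈ whites m A n,
      ReflTransGen (Rw (whites m A n)) p q := by
  intro n
  induction n with
  | zero =>
    intro p hp q hq
    have hp' : p = (0, 0) := hp
    have hq' : q = (0, 0) := hq
    rw [hp', hq']
  | succ n ih =>
    rintro p ⟨a, ha, r, hr, rfl⟩ q ⟨b, hb, s, hs, rfl⟩
    exact reach_lift hw (ih a ha b hb) ha hr hs

lemma levelSet_isCompact (hA : ∀ k, IsPattern (m k) (A k)) (n : ℕ) :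
    IsCompact (levelSet m A n) :=
  (whites_finite hA n).isCompact_biUnion fun p _ => cell_isCompact _ p

lemma levelSet_isConnected (hw : ∀ k, IsWildLabyrinthPattern (m k) (A k)) (n : ℕ) :
    IsConnected (levelSet m A n) := by
  have hm1 : ∀ k, 1 ≤ m k := fun k => by have := (hw k).1; omega
  have hA : ∀ k, IsPattern (m k) (A k) := fun k => (hw k).2.1
  have hMpos := mProd_pos hm1 n
  rw [levelSet]
  refine IsConnected.biUnion_of_reflTransGen (whites_nonempty hA n)
    (fun p _ => ((convex_Icc _ _).prod (convex_Icc _ _)).isConnected (cell_nonempty hMpos p))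
    (fun p hp q hq => ?_)
  refine ReflTransGen.mono ?_ p q (whites_reach hw n p hp q hq)
  intro a b hab
  exact ⟨adj_cells_inter hMpos hab.2.2, hab.1⟩

lemma isConnected_iInter_nested {X : Type*} [TopologicalSpace X] [T2Space X]
    {K : ℕ → Set X} (hcomp : ∀ n, IsCompact (K n)) (hconn : ∀ n, IsConnected (K n))
    (hmono : ∀ n, K (n + 1) ⊆ K n) : IsConnected (⋂ n, K n) := by
  have hcl : ∀ n, IsClosed (K n) := fun n => (hcomp n).isClosed
  have hSclosed : IsClosed (⋂ n, K n) := isClosed_iInter hcl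
  have hSne : (⋂ n, K n).Nonempty :=
    IsCompact.nonempty_iInter_of_sequence_nonempty_isCompact_isClosed K hmono
      (fun n => (hconn n).nonempty) (hcomp 0) hcl
  refine ⟨hSne, (isPreconnected_iff_subset_of_fully_disjoint_closed hSclosed).2 ?_⟩
  intro t t' ht ht' hcover hdisj
  set S := ⋂ n, K n with hS
  have hScomp : IsCompact S := (hcomp 0).of_isClosed_subset hSclosed (iInter_subset _ 0)
  obtain ⟨U, V, hU, hV, hTU, hTV, hUV⟩ :=
    SeparatedNhds.of_isCompact_isCompact (hScomp.inter_right ht) (hScomp.inter_right ht')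
      ((hdisj.mono inter_subset_right inter_subset_right))
  have hScover : S ⊆ U ∪ V := fun x hx =>
    (hcover hx).elim (fun h => Or.inl (hTU ⟨hx, h⟩)) (fun h => Or.inr (hTV ⟨hx, h⟩))
  have hexN : ∃ N, K N ⊆ U ∪ V := by
    by_contra hcon
    push_neg at hcon
    have hne : (⋂ n, K n \ (U ∪ V)).Nonempty :=
      IsCompact.nonempty_iInter_of_sequence_nonempty_isCompact_isClosed
        (fun n => K n \ (U ∪ V)) (fun n => diff_subset_diff_left (hmono n))
        (fun n => not_subset.1 (hcon n) |>.imp fun x hx => ⟨hx.1, hx.2⟩)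
        ((hcomp 0).diff (hU.union hV))
        (fun n => (hcl n).sdiff (hU.union hV))
    obtain ⟨x, hx⟩ := hne
    simp only [mem_iInter, mem_diff] at hx
    exact (hx 0).2 (hScover (mem_iInter.2 fun n => (hx n).1))
  obtain ⟨N, hN⟩ := hexN
  have hSsub : S ⊆ K N := iInter_subset _ N
  have hnot : ¬((K N ∩ U).Nonempty ∧ (K N ∩ V).Nonempty) := by
    rintro ⟨h1, h2⟩
    obtain ⟨x, hx⟩ := (hconn N).isPreconnected U V hU hV hN h1 h2
    exact (hUV.le_bot ⟨hx.2.1, hx.2.2⟩)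
  rcases Set.eq_empty_or_nonempty (K N ∩ U) with hKU | hKU
  · -- S ∩ t = ∅, hence S ⊆ t'
    right
    intro x hx
    rcases hcover hx with h | h
    · exact absurd (show x ∈ K N ∩ U from ⟨hSsub hx, hTU ⟨hx, h⟩⟩) (by rw [hKU]; exact id)
    · exact h
  · rcases Set.eq_empty_or_nonempty (K N ∩ V) with hKV | hKV
    · left
      intro x hx
      rcases hcover hx with h | h
      · exact h
      · exact absurd (show x ∈ K N ∩ V from ⟨hSsub hx, hTV ⟨hx, h⟩⟩) (by rw [hKV]; exact id)
    · exact absurd ⟨hKU, hKV⟩ hnot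

end WildAux
end WildAux


open Labyrinth in
/-- every mixed wild labyrinth fractal (in particular every self-similar
wild labyrinth fractal, i.e. the case of a constant sequence of patterns) is connected. -/
theorem wild_limitSet_connected (m : ℕ → ℕ) (A : ℕ → Set (ℕ × ℕ))
    (hwild : ∀ k, IsWildLabyrinthPattern (m k) (A k)) :
    IsConnected (limitSet m A) := by
  
  have hm1 : ∀ k, 1 ≤ m k := fun k => by have := (hwild k).1; omega
  have hA : ∀ k, IsPattern (m k) (A k) := fun k => (hwild k).2.1
  rw [limitSet]
  exact WildAux.isConnected_iInter_nested (WildAux.levelSet_isCompact hA)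
    (WildAux.levelSet_isConnected hwild) (WildAux.levelSet_succ_subset hm1 hA)
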